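/- Fix $n \ge \ell \ge 2$ and a family of $k$-element multisets $e_1,\dots,e_m$ over $\mathbb{Z}_n$. Let $W$ be the hypergraph on $\mathbb{Z}_n$ with edges $e_i' := \bigcup_{j\in e_i}[j,j+\ell)$ (cyclic windows), unit vertex capacities and unit edge demands. Let $\hat{W}$ be the weighted hypergraph on $\mathbb{Z}_n$ with ordinary edges $e_1,\dots,e_m$ of weight 1, helper edges $c_i = \{i,i+1\}$ for $i\in\mathbb{Z}_n$ of weight $\ell-1$, and vertex weights $\ell$. Then $W$ is orientable if and only if $\hat{W}$ is orientable. -/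

import Mathlib

/-- A weighted hypergraph (with edges indexed by a fintype `E`, vertex weights `ηV`
and edge weights `ηE`) is orientable. -/
def Orientable {V E : Type*} [Fintype E] [DecidableEq V]
    (edge : E → Finset V) (ηV : V → ℕ) (ηE : E → ℕ) : Prop :=
  ∃ μ : E → V → ℕ,
    (∀ e, ∑ v ∈ edge e, μ e v = ηE e) ∧
    (∀ v, ∑ e, (if v ∈ edge e then μ e v else 0) ≤ ηV v)

/- ### Auxiliary machinery -/

/-- number of indices in the fiber of `v` under `w`. -/
private def fibCard {m : ℕ} {α : Type*} [DecidableEq α] (w : Fin m → α) (v : α) : ℕ :=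
  (Finset.univ.filter (fun j => w j = v)).card

/-- rank of `i` inside its fiber. -/
private def rankOf {m : ℕ} {α : Type*} [DecidableEq α] (w : Fin m → α) (i : Fin m) : ℕ :=
  (Finset.univ.filter (fun j => w j = w i ∧ j < i)).card

private lemma rankOf_lt {m : ℕ} {α : Type*} [DecidableEq α] (w : Fin m → α) (i : Fin m) :
    rankOf w i < fibCard w (w i) := by
  unfold rankOf fibCard
  apply Finset.card_lt_card
  rw [Finset.ssubset_iff_of_subset (by
    intro j hj
    simp only [Finset.mem_filter, Finset.mem_univ, true_and] at hj ⊢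
    exact hj.1)]
  exact ⟨i, by simp, by simp⟩

private lemma rankOf_inj {m : ℕ} {α : Type*} [DecidableEq α] (w : Fin m → α) {i i' : Fin m}
    (hww : w i = w i') (hr : rankOf w i = rankOf w i') : i = i' := by
  have key : ∀ {a b : Fin m}, a < b → w a = w b → rankOf w a < rankOf w b := by
    intro a b hab hwab
    unfold rankOf
    apply Finset.card_lt_card
    rw [Finset.ssubset_iff_of_subset (by
      intro j hj
      simp only [Finset.mem_filter, Finset.mem_univ, true_and] at hj ⊢
      exact ⟨hj.1.trans hwab, hj.2.trans hab⟩)]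
    exact ⟨a, by simp [hwab, hab], by simp⟩
  rcases lt_trichotomy i i' with h | h | h
  · exact absurd hr (Nat.ne_of_lt (key h hww))
  · exact h
  · exact absurd hr.symm (Nat.ne_of_lt (key h hww.symm))

/-- telescoped chain inequality. -/
private lemma chain_aux {n : ℕ} (x c : ZMod n → ℕ)
    (K : ∀ v, x v + c v ≤ 1 + c (v + 1)) :
    ∀ (u : ℕ) (v : ZMod n), x v + c v ≤ (u + 1) + c (v + ((u + 1 : ℕ) : ZMod n)) := by
  intro u
  induction u with
  | zero =>
      intro v
      simpa using K v
  | succ u ih =>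
      intro v
      have h1 := ih v
      have h2 := K (v + ((u + 1 : ℕ) : ZMod n))
      have h3 : v + ((u + 1 : ℕ) : ZMod n) + 1 = v + ((u + 1 + 1 : ℕ) : ZMod n) := by
        push_cast
        ring
      rw [h3] at h2
      omega

/-- the parking-style assignment is injective. -/
private lemma rep_inj {n ℓ m : ℕ} [NeZero n] (hn : ℓ ≤ n) (hℓ : 2 ≤ ℓ)
    (w : Fin m → ZMod n) (c : ZMod n → ℕ)
    (hcb : ∀ v, c v ≤ ℓ - 1)
    (K : ∀ v, fibCard w v + c v ≤ 1 + c (v + 1)) :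
    Function.Injective (fun i : Fin m => w i + ((c (w i) + rankOf w i : ℕ) : ZMod n)) := by
  intro i i' hee
  simp only [] at hee
  by_cases hww : w i = w i'
  · -- same fiber
    have hb1 : c (w i) + rankOf w i < n := by
      have h1 := K (w i)
      have h2 := rankOf_lt w i
      have h3 := hcb (w i + 1)
      omega
    have hb2 : c (w i') + rankOf w i' < n := by
      have h1 := K (w i')
      have h2 := rankOf_lt w i'
      have h3 := hcb (w i' + 1)
      omega
    rw [hww] at hee hb1
    have hcast := add_left_cancel hee
    have hnat : c (w i') + rankOf w i = c (w i') + rankOf w i' := by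
      rw [← ZMod.val_cast_of_lt (n := n) hb1, ← ZMod.val_cast_of_lt (n := n) hb2, hcast]
    exact rankOf_inj w hww (by omega)
  · -- different fibers
    exfalso
    have hne1 : (w i' - w i).val ≠ 0 := fun h =>
      hww (sub_eq_zero.mp ((ZMod.val_eq_zero _).mp h)).symm
    have hne2 : (w i - w i').val ≠ 0 := fun h =>
      hww (sub_eq_zero.mp ((ZMod.val_eq_zero _).mp h))
    obtain ⟨u₁, hu₁⟩ : ∃ t, (w i' - w i).val = t + 1 := ⟨(w i' - w i).val - 1, by omega⟩
    obtain ⟨u₂, hu₂⟩ : ∃ t, (w i - w i').val = t + 1 := ⟨(w i - w i').val - 1, by omega⟩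
    have hv1 : (((w i' - w i).val : ℕ) : ZMod n) = w i' - w i := ZMod.natCast_rightInverse _
    have hv2 : (((w i - w i').val : ℕ) : ZMod n) = w i - w i' := ZMod.natCast_rightInverse _
    have hw1 : w i' = w i + (((u₁ + 1 : ℕ)) : ZMod n) := by
      rw [← hu₁, hv1]; ring
    have hw2 : w i = w i' + (((u₂ + 1 : ℕ)) : ZMod n) := by
      rw [← hu₂, hv2]; ring
    -- (u₁+1) + (u₂+1) = n
    have hsum0 : (((w i' - w i).val + (w i - w i').val : ℕ) : ZMod n) = ((0 : ℕ) : ZMod n) := by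
      push_cast
      rw [hv1, hv2]
      ring
    have hdvd : n ∣ ((w i' - w i).val + (w i - w i').val) := by
      have := (ZMod.natCast_eq_natCast_iff _ _ _).mp hsum0
      exact Nat.modEq_zero_iff_dvd.mp this
    have hlt1 : (w i' - w i).val < n := ZMod.val_lt _
    have hlt2 : (w i - w i').val < n := ZMod.val_lt _
    have hsumn : (u₁ + 1) + (u₂ + 1) = n := by
      rcases hdvd with ⟨z, hz⟩
      have hz1 : z = 1 := by
        rcases Nat.lt_or_ge z 2 with h | h
        · interval_cases z
          · omega
          · rfl
        · exfalso
          have := Nat.mul_le_mul_left n h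
          omega
      rw [hz1, mul_one] at hz
      omega
    -- chain inequalities
    have hch1 : fibCard w (w i) + c (w i) ≤ (u₁ + 1) + c (w i') := by
      have := chain_aux (fibCard w) c K u₁ (w i)
      rwa [← hw1] at this
    have hch2 : fibCard w (w i') + c (w i') ≤ (u₂ + 1) + c (w i) := by
      have := chain_aux (fibCard w) c K u₂ (w i')
      rwa [← hw2] at this
    -- congruence
    have hAB : ((c (w i) + rankOf w i : ℕ) : ZMod n)
        = (((u₁ + 1) + (c (w i') + rankOf w i') : ℕ) : ZMod n) := by
      calc ((c (w i) + rankOf w i : ℕ) : ZMod n)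
          = (w i' + ((c (w i') + rankOf w i' : ℕ) : ZMod n)) - w i := by
            rw [← hee]; ring
        _ = ((u₁ + 1 : ℕ) : ZMod n) + ((c (w i') + rankOf w i' : ℕ) : ZMod n) := by
            rw [hw1]; ring
        _ = (((u₁ + 1) + (c (w i') + rankOf w i') : ℕ) : ZMod n) := by
            push_cast; ring
    have hmod : (c (w i) + rankOf w i) ≡ ((u₁ + 1) + (c (w i') + rankOf w i')) [MOD n] :=
      (ZMod.natCast_eq_natCast_iff _ _ _).mp hAB
    have hr1 := rankOf_lt w i
    have hr2 := rankOf_lt w i'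
    have hABlt : c (w i) + rankOf w i < (u₁ + 1) + (c (w i') + rankOf w i') := by omega
    have hBAlt : (u₁ + 1) + (c (w i') + rankOf w i') < n + (c (w i) + rankOf w i) := by omega
    have hdvd2 : n ∣ ((u₁ + 1) + (c (w i') + rankOf w i')) - (c (w i) + rankOf w i) :=
      (Nat.modEq_iff_dvd' (by omega)).mp hmod
    have := Nat.le_of_dvd (by omega) hdvd2
    omega

/-- number of arcs `w i → w i + p i` crossing the boundary just after `j`. -/
private def crossCard {n m : ℕ} (w : Fin m → ZMod n) (p : Fin m → ℕ) (j : ZMod n) : ℕ :=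
  (Finset.univ.filter (fun i : Fin m => ((j - w i).val < p i))).card

private lemma crossCard_le {n ℓ m : ℕ} [NeZero n] (hn : ℓ ≤ n) (hℓ : 2 ≤ ℓ)
    (w : Fin m → ZMod n) (p : Fin m → ℕ) (ρ : Fin m → ZMod n)
    (hρinj : Function.Injective ρ) (hp : ∀ i, p i < ℓ)
    (hρeq : ∀ i, w i + (p i : ZMod n) = ρ i) (j : ZMod n) :
    crossCard w p j ≤ ℓ - 1 := by
  unfold crossCard
  calc (Finset.univ.filter (fun i : Fin m => ((j - w i).val < p i))).card
      ≤ (Finset.Ioo 0 ℓ).card := by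
        apply Finset.card_le_card_of_injOn (fun i => (ρ i - j).val)
        · intro i hi
          simp only [Finset.mem_coe, Finset.mem_filter, Finset.mem_univ, true_and] at hi
          have hpi := hp i
          have hval : (ρ i - j).val = p i - (j - w i).val := by
            have hx : ρ i - j = ((p i - (j - w i).val : ℕ) : ZMod n) := by
              rw [← hρeq i, Nat.cast_sub (le_of_lt hi),
                ZMod.natCast_rightInverse (j - w i)]
              ring
            rw [hx, ZMod.val_cast_of_lt (by omega)]
          rw [Finset.mem_coe, Finset.mem_Ioo]
          beta_reduce
          rw [hval]
          omega
        · intro i _ i' _ hvv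
          simp only [] at hvv
          have h1 : ρ i - j = ρ i' - j := ZMod.val_injective n hvv
          exact hρinj (sub_left_inj.mp h1)
    _ = ℓ - 1 := by simp

private lemma crossCard_key {n ℓ m : ℕ} [NeZero n] (hn : ℓ ≤ n) (hℓ : 2 ≤ ℓ)
    (w : Fin m → ZMod n) (p : Fin m → ℕ) (ρ : Fin m → ZMod n)
    (hρinj : Function.Injective ρ) (hp : ∀ i, p i < ℓ)
    (hρeq : ∀ i, w i + (p i : ZMod n) = ρ i) (v : ZMod n) :
    (Finset.univ.filter (fun i : Fin m => v = w i)).card + crossCard w p (v - 1)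
      ≤ 1 + crossCard w p v := by
  classical
  have h2n : 2 ≤ n := hℓ.trans hn
  have hm1val : (-1 : ZMod n).val = n - 1 := by
    have h1 : ((n - 1 : ℕ) : ZMod n) = -1 := by
      rw [Nat.cast_sub (by omega : 1 ≤ n), ZMod.natCast_self]
      push_cast
      ring
    rw [← h1, ZMod.val_cast_of_lt (by omega : n - 1 < n)]
  set A := Finset.univ.filter (fun i : Fin m => v = w i) with hA
  set B := Finset.univ.filter (fun i : Fin m => ((v - 1 - w i).val < p i)) with hB
  set C := Finset.univ.filter (fun i : Fin m => ((v - w i).val < p i)) with hC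
  set D := Finset.univ.filter (fun i : Fin m => ρ i = v) with hD
  have hAB : Disjoint A B := by
    rw [Finset.disjoint_left]
    intro i hiA hiB
    rw [hA, Finset.mem_filter] at hiA
    rw [hB, Finset.mem_filter] at hiB
    have h1 : v - 1 - w i = -1 := by rw [hiA.2]; ring
    rw [h1, hm1val] at hiB
    have := hp i
    omega
  have hsub : (A ∪ B) \ C ⊆ D := by
    intro i hi
    rw [Finset.mem_sdiff, Finset.mem_union] at hi
    obtain ⟨hABm, hnC⟩ := hi
    rw [hC, Finset.mem_filter] at hnC
    push_neg at hnC
    have hnC' : p i ≤ (v - w i).val := hnC (Finset.mem_univ i)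
    rw [hD, Finset.mem_filter]
    refine ⟨Finset.mem_univ _, ?_⟩
    rcases hABm with hiA | hiB
    · rw [hA, Finset.mem_filter] at hiA
      have h0 : v - w i = 0 := by rw [hiA.2]; exact sub_self _
      have hval0 : (v - w i).val = 0 := by rw [h0]; exact ZMod.val_zero
      have hp0 : p i = 0 := by omega
      rw [← hρeq i, hp0]
      push_cast
      rw [hiA.2]
      ring
    · rw [hB, Finset.mem_filter] at hiB
      have hd' : (v - 1 - w i).val < p i := hiB.2
      have hpi := hp i
      have hlt : (v - 1 - w i).val + 1 < n := by omega
      have hvw : v - w i = (((v - 1 - w i).val + 1 : ℕ) : ZMod n) := by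
        push_cast
        rw [ZMod.natCast_rightInverse (v - 1 - w i)]
        ring
      have hdval : (v - w i).val = (v - 1 - w i).val + 1 := by
        rw [hvw, ZMod.val_cast_of_lt hlt]
      have hpieq : p i = (v - 1 - w i).val + 1 := by omega
      rw [← hρeq i, hpieq]
      push_cast
      rw [ZMod.natCast_rightInverse (v - 1 - w i)]
      ring
  have hDcard : D.card ≤ 1 := by
    apply Finset.card_le_one.mpr
    intro a ha b hb
    rw [hD, Finset.mem_filter] at ha hb
    exact hρinj (ha.2.trans hb.2.symm)
  have h1 : A.card + B.card = (A ∪ B).card := (Finset.card_union_of_disjoint hAB).symm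
  have h2 : ((A ∪ B) ∩ C).card + ((A ∪ B) \ C).card = (A ∪ B).card :=
    Finset.card_inter_add_card_sdiff _ _
  have h3 : ((A ∪ B) ∩ C).card ≤ C.card := Finset.card_le_card Finset.inter_subset_right
  have h4 : ((A ∪ B) \ C).card ≤ D.card := Finset.card_le_card hsub
  have hBc : crossCard w p (v - 1) = B.card := rfl
  have hCc : crossCard w p v = C.card := rfl
  omega

/-- `W` (cyclic windows of size ℓ, unit capacities) is orientable iff
the weighted hypergraph `Ŵ` (ordinary edges of weight 1, helper edges `{i,i+1}` of
weight ℓ-1, vertex weight ℓ) is orientable. -/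
theorem stmt_4 (n ℓ k m : ℕ) [NeZero n] (hn : ℓ ≤ n) (hℓ : 2 ≤ ℓ) (hk : 2 ≤ k)
    (e : Fin m → Multiset (ZMod n))
    (hcard : ∀ i, Multiset.card (e i) = k) :
    Orientable (V := ZMod n)
      (fun i : Fin m => (e i).toFinset.biUnion (fun j =>
        (Finset.range ℓ).image (fun p : ℕ => (j + (p : ZMod n)))))
      (fun _ => 1) (fun _ => 1)
    ↔ Orientable (V := ZMod n) (E := Fin m ⊕ ZMod n)
        (Sum.elim (fun i : Fin m => (e i).toFinset)
          (fun i : ZMod n => ({i, i + 1} : Finset (ZMod n))))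
        (fun _ => ℓ)
        (Sum.elim (fun _ => 1) (fun _ => ℓ - 1)) := by
  classical
  have h2n : 2 ≤ n := hℓ.trans hn
  haveI : Fact (1 < n) := ⟨by omega⟩
  have hone : (1 : ZMod n) ≠ 0 := one_ne_zero
  have hjj : ∀ j : ZMod n, j ≠ j + 1 := fun j h => hone (left_eq_add.mp h)
  have hsac : ∀ v : ZMod n, v - 1 + 1 = v := fun v => sub_add_cancel v 1
  have hvm : ∀ v : ZMod n, v - 1 ≠ v := fun v h => hone (sub_eq_self.mp h)
  simp only [Orientable]
  constructor
  · -- W orientable → Ŵ orientable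
    rintro ⟨μ, hE, hV⟩
    have hex : ∀ i : Fin m, ∃ v ∈ (e i).toFinset.biUnion (fun j =>
        (Finset.range ℓ).image (fun p : ℕ => (j + (p : ZMod n)))), μ i v ≠ 0 := by
      intro i
      apply Finset.exists_ne_zero_of_sum_ne_zero
      have h := hE i
      intro h0
      rw [h0] at h
      exact zero_ne_one h
    choose ρ hρmem hρne using hex
    have hρinj : Function.Injective ρ := by
      intro i i' hii
      by_contra hne
      have h1 := hV (ρ i)
      have h2 : ∑ j ∈ ({i, i'} : Finset (Fin m)),
          (if ρ i ∈ (e j).toFinset.biUnion (fun j =>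
            (Finset.range ℓ).image (fun p : ℕ => (j + (p : ZMod n)))) then μ j (ρ i) else 0)
          ≤ ∑ j, (if ρ i ∈ (e j).toFinset.biUnion (fun j =>
            (Finset.range ℓ).image (fun p : ℕ => (j + (p : ZMod n)))) then μ j (ρ i) else 0) :=
        Finset.sum_le_sum_of_subset (Finset.subset_univ _)
      have hmem' : ρ i ∈ (e i').toFinset.biUnion (fun j =>
          (Finset.range ℓ).image (fun p : ℕ => (j + (p : ZMod n)))) := by
        rw [hii]; exact hρmem i'
      have hb : μ i' (ρ i) ≠ 0 := by rw [hii]; exact hρne i'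
      rw [Finset.sum_pair hne, if_pos (hρmem i), if_pos hmem'] at h2
      have ha := hρne i
      omega
    have hex2 : ∀ i : Fin m, ∃ wv, wv ∈ (e i).toFinset ∧ ∃ q, q < ℓ ∧ wv + (q : ZMod n) = ρ i := by
      intro i
      have h := hρmem i
      simp only [Finset.mem_biUnion, Finset.mem_image, Finset.mem_range] at h
      obtain ⟨j, hj, q, hq, hqe⟩ := h
      exact ⟨j, hj, q, hq, hqe⟩
    choose w hw p hp hρeq using hex2
    refine ⟨Sum.elim (fun i v => if v = w i then 1 else 0)
      (fun j v => if v = j then (ℓ - 1) - crossCard w p j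
        else if v = j + 1 then crossCard w p j else 0), ?_, ?_⟩
    · rintro (i | j)
      · simp only [Sum.elim_inl]
        rw [Finset.sum_ite_eq' ((e i).toFinset) (w i) (fun _ => 1), if_pos (hw i)]
      · simp only [Sum.elim_inr]
        rw [Finset.sum_pair (hjj j), if_pos rfl, if_neg (Ne.symm (hjj j)), if_pos rfl]
        exact Nat.sub_add_cancel (crossCard_le hn hℓ w p ρ hρinj hp hρeq j)
    · intro v
      rw [Fintype.sum_sum_type]
      simp only [Sum.elim_inl, Sum.elim_inr]
      have hS1 : ∑ i : Fin m, (if v ∈ (e i).toFinset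
            then (if v = w i then 1 else 0) else 0)
          ≤ (Finset.univ.filter (fun i : Fin m => v = w i)).card := by
        rw [Finset.card_filter]
        apply Finset.sum_le_sum
        intro i _
        split_ifs <;> omega
      have hS2 : ∑ j : ZMod n, (if v ∈ ({j, j + 1} : Finset (ZMod n))
            then (if v = j then (ℓ - 1) - crossCard w p j
              else if v = j + 1 then crossCard w p j else 0) else 0)
          = crossCard w p (v - 1) + ((ℓ - 1) - crossCard w p v) := by
        rw [← Finset.sum_subset (Finset.subset_univ ({v - 1, v} : Finset (ZMod n))) (by
          intro j _ hj
          simp only [Finset.mem_insert, Finset.mem_singleton] at hj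
          push_neg at hj
          have hnm : v ∉ ({j, j + 1} : Finset (ZMod n)) := by
            simp only [Finset.mem_insert, Finset.mem_singleton]
            push_neg
            refine ⟨fun h => hj.2 h.symm, fun h => hj.1 ?_⟩
            rw [h, add_sub_cancel_right]
          rw [if_neg hnm])]
        rw [Finset.sum_pair (hvm v), hsac v]
        rw [if_pos (by simp : v ∈ ({v - 1, v} : Finset (ZMod n))),
          if_pos (Finset.mem_insert_self v {v + 1}),
          if_neg (Ne.symm (hvm v)), if_pos rfl, if_pos rfl]
      refine le_trans (add_le_add hS1 hS2.le) ?_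
      have hkey := crossCard_key hn hℓ w p ρ hρinj hp hρeq v
      have hle := crossCard_le hn hℓ w p ρ hρinj hp hρeq v
      omega
  · -- Ŵ orientable → W orientable
    rintro ⟨ν, hE, hV⟩
    have hex : ∀ i : Fin m, ∃ v ∈ (e i).toFinset, ν (Sum.inl i) v ≠ 0 := by
      intro i
      apply Finset.exists_ne_zero_of_sum_ne_zero
      have h := hE (Sum.inl i)
      simp only [Sum.elim_inl] at h
      intro h0
      rw [h0] at h
      exact zero_ne_one h
    choose w hw hwne using hex
    have hab : ∀ j : ZMod n, ν (Sum.inr j) j + ν (Sum.inr j) (j + 1) = ℓ - 1 := by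
      intro j
      have h := hE (Sum.inr j)
      simp only [Sum.elim_inr] at h
      rwa [Finset.sum_pair (hjj j)] at h
    set c : ZMod n → ℕ := fun v => ν (Sum.inr (v - 1)) v with hc
    have hcb : ∀ v, c v ≤ ℓ - 1 := by
      intro v
      have h := hab (v - 1)
      rw [hsac v] at h
      have hcv : c v = ν (Sum.inr (v - 1)) v := rfl
      omega
    have hK : ∀ v, fibCard w v + c v ≤ 1 + c (v + 1) := by
      intro v
      have h := hV v
      rw [Fintype.sum_sum_type] at h
      simp only [Sum.elim_inl, Sum.elim_inr] at h
      have hS1 : fibCard w v ≤ ∑ i : Fin m, (if v ∈ (e i).toFinset then ν (Sum.inl i) v else 0) := by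
        unfold fibCard
        rw [Finset.card_eq_sum_ones]
        calc ∑ _i ∈ Finset.univ.filter (fun j => w j = v), 1
            ≤ ∑ i ∈ Finset.univ.filter (fun j => w j = v),
                (if v ∈ (e i).toFinset then ν (Sum.inl i) v else 0) := by
              apply Finset.sum_le_sum
              intro i hi
              rw [Finset.mem_filter] at hi
              rw [if_pos (hi.2 ▸ hw i)]
              have := hwne i
              rw [hi.2] at this
              omega
          _ ≤ _ := Finset.sum_le_sum_of_subset (Finset.subset_univ _)
      have hS2 : ν (Sum.inr (v - 1)) v + ν (Sum.inr v) v
          ≤ ∑ j : ZMod n, (if v ∈ ({j, j + 1} : Finset (ZMod n)) then ν (Sum.inr j) v else 0) := by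
        calc ν (Sum.inr (v - 1)) v + ν (Sum.inr v) v
            = ∑ j ∈ ({v - 1, v} : Finset (ZMod n)),
                (if v ∈ ({j, j + 1} : Finset (ZMod n)) then ν (Sum.inr j) v else 0) := by
              rw [Finset.sum_pair (hvm v)]
              rw [if_pos (by rw [hsac v]; simp : v ∈ ({v - 1, v - 1 + 1} : Finset (ZMod n))),
                if_pos (Finset.mem_insert_self v {v + 1})]
          _ ≤ _ := Finset.sum_le_sum_of_subset (Finset.subset_univ _)
      have hcv : c v = ν (Sum.inr (v - 1)) v := rfl
      have hcv1 : c (v + 1) = ν (Sum.inr v) (v + 1) := by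
        show ν (Sum.inr (v + 1 - 1)) (v + 1) = _
        rw [add_sub_cancel_right]
      have habv := hab v
      have h' := le_trans (add_le_add hS1 hS2) h
      omega
    have hinj : Function.Injective
        (fun i : Fin m => w i + ((c (w i) + rankOf w i : ℕ) : ZMod n)) :=
      rep_inj hn hℓ w c hcb hK
    have hoff : ∀ i, c (w i) + rankOf w i < ℓ := by
      intro i
      have h1 := hK (w i)
      have h2 := rankOf_lt w i
      have h3 := hcb (w i + 1)
      omega
    refine ⟨fun i v => if v = w i + ((c (w i) + rankOf w i : ℕ) : ZMod n) then 1 else 0, ?_, ?_⟩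
    · intro i
      rw [Finset.sum_ite_eq' _ _ (fun _ => 1), if_pos]
      apply Finset.mem_biUnion.mpr
      exact ⟨w i, hw i, Finset.mem_image.mpr
        ⟨c (w i) + rankOf w i, Finset.mem_range.mpr (hoff i), rfl⟩⟩
    · intro v
      calc ∑ i : Fin m, (if v ∈ (e i).toFinset.biUnion (fun j =>
              (Finset.range ℓ).image (fun q : ℕ => (j + (q : ZMod n))))
              then (if v = w i + ((c (w i) + rankOf w i : ℕ) : ZMod n) then 1 else 0) else 0)
          ≤ ∑ i : Fin m, (if v = w i + ((c (w i) + rankOf w i : ℕ) : ZMod n) then 1 else 0) := by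
            apply Finset.sum_le_sum
            intro i _
            split_ifs <;> omega
        _ = (Finset.univ.filter
              (fun i : Fin m => v = w i + ((c (w i) + rankOf w i : ℕ) : ZMod n))).card :=
            (Finset.card_filter _ _).symm
        _ ≤ 1 := by
            apply Finset.card_le_one.mpr
            intro a ha b hb
            rw [Finset.mem_filter] at ha hb
            exact hinj (ha.2.symm.trans hb.2)
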